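/- Let 𝒰 be a join-specification for a poset P. The lattice I_𝒰 of 𝒰-ideals is a frame if and only if for all p ∈ P and S ∈ 𝒰 with p ≤ ⋁S, one has p↓ ∩ Γ_𝒰(S) = Γ_𝒰(p↓ ∩ S↓). -/
import Mathlib


variable {P : Type*} [PartialOrder P]

/-- Down-closure of a set. -/
def dcl (S : Set P) : Set P := {p | ∃ s ∈ S, p ≤ s}

/-- Principal downset. -/
def pd (p : P) : Set P := {q | q ≤ p}

/-- Standard closure operator: extensive, monotone, idempotent, with Γ({p}) = p↓. -/
def IsStdClosure (Γ : Set P → Set P) : Prop :=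
  (∀ S, S ⊆ Γ S) ∧ (∀ S T : Set P, S ⊆ T → Γ S ⊆ Γ T) ∧ (∀ S, Γ (Γ S) = Γ S) ∧
    ∀ p : P, Γ {p} = pd p

def IsClosedIn (Γ : Set P → Set P) (C : Set P) : Prop := Γ C = C

/-- Join-specification: all joins of members exist, and all singletons belong. -/
def IsJoinSpec (𝒰 : Set (Set P)) : Prop :=
  (∀ S ∈ 𝒰, ∃ x : P, IsLUB S x) ∧ ∀ p : P, {p} ∈ 𝒰

/-- 𝒰-ideal: down-closed and closed under joins of members of 𝒰. -/
def IsUIdeal (𝒰 : Set (Set P)) (I : Set P) : Prop :=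
  IsLowerSet I ∧ ∀ S ∈ 𝒰, S ⊆ I → ∀ x : P, IsLUB S x → x ∈ I

/-- The smallest 𝒰-ideal containing S. -/
def GammaU (𝒰 : Set (Set P)) (S : Set P) : Set P :=
  ⋂₀ {I : Set P | IsUIdeal 𝒰 I ∧ S ⊆ I}

/-- 𝒰⁺: sets whose join exists and lies in the 𝒰-ideal closure. -/
def UPlus (𝒰 : Set (Set P)) : Set (Set P) :=
  {S : Set P | ∃ x : P, IsLUB S x ∧ x ∈ GammaU 𝒰 S}

/-- Υ_𝒰(S) = { ⋁T : T ∈ 𝒰⁺, T ⊆ S↓ }. -/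
def Upsilon (𝒰 : Set (Set P)) (S : Set P) : Set P :=
  {x : P | ∃ T ∈ UPlus 𝒰, T ⊆ dcl S ∧ IsLUB T x}

/-- The complete lattice of 𝒰-ideals (meets = intersections, joins = closure of unions)
is a frame. -/
def IdealFrame (𝒰 : Set (Set P)) : Prop :=
  ∀ D : Set P, IsUIdeal 𝒰 D → ∀ 𝒞 : Set (Set P), (∀ C ∈ 𝒞, IsUIdeal 𝒰 C) →
    D ∩ GammaU 𝒰 (⋃₀ 𝒞) = GammaU 𝒰 (⋃ C ∈ 𝒞, D ∩ C)

/-- The complete lattice of Γ-closed sets is a frame. -/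
def ClosFrame (Γ : Set P → Set P) : Prop :=
  ∀ D : Set P, IsClosedIn Γ D → ∀ 𝒞 : Set (Set P), (∀ C ∈ 𝒞, IsClosedIn Γ C) →
    D ∩ Γ (⋃₀ 𝒞) = Γ (⋃ C ∈ 𝒞, D ∩ C)


section Aux
variable {𝒰 : Set (Set P)}

lemma gamma_isUIdeal (S : Set P) : IsUIdeal 𝒰 (GammaU 𝒰 S) := by
  constructor
  · intro a b hba ha I hI
    exact hI.1.1 hba (ha I hI)
  · intro T hT hTsub x hx I hI
    exact hI.1.2 T hT (fun t ht => hTsub ht I hI) x hx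

lemma subset_gamma (S : Set P) : S ⊆ GammaU 𝒰 S :=
  fun s hs I hI => hI.2 hs

lemma gamma_min {S I : Set P} (hI : IsUIdeal 𝒰 I) (hSI : S ⊆ I) :
    GammaU 𝒰 S ⊆ I := fun x hx => hx I ⟨hI, hSI⟩

lemma gamma_mono {S T : Set P} (h : S ⊆ T) : GammaU 𝒰 S ⊆ GammaU 𝒰 T :=
  gamma_min (gamma_isUIdeal T) (h.trans (subset_gamma T))

lemma gamma_ideal_eq {I : Set P} (hI : IsUIdeal 𝒰 I) : GammaU 𝒰 I = I :=
  Set.Subset.antisymm (gamma_min hI subset_rfl) (subset_gamma I)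

lemma pd_isUIdeal (p : P) : IsUIdeal 𝒰 (pd p) := by
  constructor
  · intro a b hba ha; exact hba.trans ha
  · intro T _ hT x hx
    exact hx.2 (fun t ht => hT ht)

lemma inter_isUIdeal {D C : Set P} (hD : IsUIdeal 𝒰 D) (hC : IsUIdeal 𝒰 C) :
    IsUIdeal 𝒰 (D ∩ C) := by
  constructor
  · intro a b hba ha; exact ⟨hD.1 hba ha.1, hC.1 hba ha.2⟩
  · intro T hT hTsub x hx
    exact ⟨hD.2 T hT (fun t ht => (hTsub ht).1) x hx,
           hC.2 T hT (fun t ht => (hTsub ht).2) x hx⟩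

lemma gamma_dcl (S : Set P) : GammaU 𝒰 (dcl S) = GammaU 𝒰 S := by
  apply Set.Subset.antisymm
  · apply gamma_min (gamma_isUIdeal S)
    rintro q ⟨s, hs, hqs⟩
    exact (gamma_isUIdeal S).1 hqs (subset_gamma S hs)
  · exact gamma_mono (fun s hs => ⟨s, hs, le_rfl⟩)

end Aux

theorem stmt12 (𝒰 : Set (Set P)) (hU : IsJoinSpec 𝒰) :
    IdealFrame 𝒰 ↔ ∀ p : P, ∀ S ∈ 𝒰, ∀ x : P, IsLUB S x → p ≤ x →
      pd p ∩ GammaU 𝒰 S = GammaU 𝒰 (pd p ∩ dcl S) := by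
  constructor
  · -- forward
    intro h p S hS x hx hpx
    have h2 := h (pd p) (pd_isUIdeal p) ((fun s => pd s) '' S)
      (by rintro _ ⟨s, hs, rfl⟩; exact pd_isUIdeal s)
    have e1 : ⋃₀ ((fun s => pd s) '' S) = dcl S := by
      ext q; simp [dcl, pd, Set.mem_sUnion]
    have e2 : (⋃ C ∈ (fun s => pd s) '' S, pd p ∩ C) = pd p ∩ dcl S := by
      ext q
      simp only [Set.mem_iUnion, Set.mem_image, Set.mem_inter_iff, dcl, pd,
        Set.mem_setOf_eq]
      constructor
      · rintro ⟨_, ⟨s, hs, rfl⟩, hq1, hq2⟩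
        exact ⟨hq1, s, hs, hq2⟩
      · rintro ⟨hq1, s, hs, hq2⟩
        exact ⟨pd s, ⟨s, hs, rfl⟩, hq1, hq2⟩
    rw [e1, e2, gamma_dcl] at h2
    exact h2
  · -- backward
    intro h D hD 𝒞 h𝒞
    set M := GammaU 𝒰 (⋃ C ∈ 𝒞, D ∩ C) with hM
    apply Set.Subset.antisymm
    · -- hard direction
      set K : Set P := {q | pd q ∩ D ⊆ M} with hK
      have hKideal : IsUIdeal 𝒰 K := by
        constructor
        · intro a b hba ha r hr
          exact ha ⟨hr.1.trans hba, hr.2⟩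
        · intro S hS hSK y hy r hr
          -- r ≤ y, r ∈ D; show r ∈ M
          have h1 := h r S hS y hy hr.1
          have hrS : r ∈ GammaU 𝒰 S := by
            have hyS : y ∈ GammaU 𝒰 S :=
              (gamma_isUIdeal S).2 S hS (subset_gamma S) y hy
            exact (gamma_isUIdeal S).1 hr.1 hyS
          have hr2 : r ∈ GammaU 𝒰 (pd r ∩ dcl S) := by
            rw [← h1]; exact ⟨le_rfl, hrS⟩
          have hsub : pd r ∩ dcl S ⊆ M := by
            rintro t ⟨htr, s, hs, hts⟩
            exact hSK hs ⟨hts, hD.1 htr hr.2⟩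
          have := gamma_min (gamma_isUIdeal _) (hsub.trans (subset_gamma _)) hr2
          rwa [gamma_ideal_eq (gamma_isUIdeal _)] at this
      have hCK : ⋃₀ 𝒞 ⊆ K := by
        rintro q ⟨C, hC, hqC⟩ r hr
        apply subset_gamma
        exact Set.mem_biUnion hC ⟨hr.2, (h𝒞 C hC).1 hr.1 hqC⟩
      intro q hq
      have : q ∈ K := gamma_min hKideal hCK hq.2
      exact this ⟨le_rfl, hq.1⟩
    · apply gamma_min (inter_isUIdeal hD (gamma_isUIdeal _))
      rintro q hq
      simp only [Set.mem_iUnion] at hq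
      obtain ⟨C, hC, hqD, hqC⟩ := hq
      exact ⟨hqD, subset_gamma _ ⟨C, hC, hqC⟩⟩
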